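/- Duality/summation-by-parts identity: let (p, q) solve the adjoint BS∆E p_n + q_n η_n = p_{n+1} + b_x*(n+1) p_{n+1} + b(n+1,n+1) σ_x*(n+1) q_{n+1} + l_x*(n+1) + σ_x*(n+1) p_{n+1} ξ_{n+1}^H with p_N = Φ_x(X*_N), q_N = 0, and let V solve the variation equation with V_0 = 0. Then, assuming b_x*(N) = σ_x*(N) = l_x*(N) = 0, E[Φ_x(X*_N) V_N] = − E Σ_{n=0}^{N-1} l_x*(n) V_n + E Σ_{n=0}^{N-1} [b_u*(n) p_n v_n + σ_u*(n) p_n v_n ξ_n^H + σ_u*(n) q_n v_n η_n ξ_n^H]. -/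

import Mathlib

open MeasureTheory ProbabilityTheory

/-- Duality (summation-by-parts) identity between the adjoint BS∆E
`p_n + q_n η_n = p_{n+1} + b_x*(n+1) p_{n+1} + b(n+1,n+1) σ_x*(n+1) q_{n+1}
  + l_x*(n+1) + σ_x*(n+1) p_{n+1} ξ_{n+1}` (with `p_N = Φ_x(X*_N)`, `q_N = 0`)
and the variation equation
`V_{n+1} = V_n + b_x*(n)V_n + b_u*(n)v_n + [σ_x*(n)V_n + σ_u*(n)v_n] ξ_n`, `V_0 = 0`:
`E[Φ_x(X*_N) V_N] = −E ∑_{n<N} l_x*(n) V_n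
  + E ∑_{n<N} [b_u*(n) p_n v_n + σ_u*(n) p_n v_n ξ_n + σ_u*(n) q_n v_n η_n ξ_n]`. -/
theorem duality_identity
    {Ω : Type*} [m0 : MeasurableSpace Ω] (P : Measure Ω) [IsProbabilityMeasure P]
    (N : ℕ) (hN : 1 ≤ N)
    (F : ℕ → MeasurableSpace Ω) (hFle : ∀ n, F n ≤ m0)
    (ξ η : ℕ → Ω → ℝ)
    (hξmeas : ∀ n, Measurable[F (n + 1)] (ξ n))
    (hηmeas : ∀ n, Measurable[F (n + 1)] (η n))
    -- key conditional identities for the whitened noise: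
    -- `E[W η_n] = 0` and `E[W η_n ξ_n] = b(n,n) E[W]` for `F_n`-measurable `W`
    (bdiag : ℕ → ℝ)
    (hzero : ∀ n < N, ∀ W : Ω → ℝ, StronglyMeasurable[F n] W →
      Integrable (fun ω => W ω * η n ω) P → ∫ ω, W ω * η n ω ∂P = 0)
    (hkey : ∀ n < N, ∀ W : Ω → ℝ, StronglyMeasurable[F n] W →
      Integrable (fun ω => W ω * η n ω * ξ n ω) P →
      ∫ ω, W ω * η n ω * ξ n ω ∂P = bdiag n * ∫ ω, W ω ∂P)
    -- coefficient processes `b_x*(n), σ_x*(n), l_x*(n), b_u*(n), σ_u*(n)`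
    (Bx Sx Lx Bu Su : ℕ → Ω → ℝ)
    (hcoefmeas : ∀ n ≤ N, StronglyMeasurable[F n] (Bx n) ∧
      StronglyMeasurable[F n] (Sx n) ∧ StronglyMeasurable[F n] (Lx n) ∧
      StronglyMeasurable[F n] (Bu n) ∧ StronglyMeasurable[F n] (Su n))
    (hBxN : ∀ ω, Bx N ω = 0) (hSxN : ∀ ω, Sx N ω = 0) (hLxN : ∀ ω, Lx N ω = 0)
    -- adjoint pair `(p, q)` and variation pair `(V, v)`: adapted and square integrable
    (p q V v : ℕ → Ω → ℝ)
    (hpmeas : ∀ n ≤ N, StronglyMeasurable[F n] (p n) ∧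
      StronglyMeasurable[F n] (q n) ∧ StronglyMeasurable[F n] (V n) ∧
      StronglyMeasurable[F n] (v n))
    (hpLp : ∀ n ≤ N, MemLp (p n) 2 P ∧ MemLp (q n) 2 P ∧
      MemLp (V n) 2 P ∧ MemLp (v n) 2 P)
    (hqN : q N =ᵐ[P] fun _ => 0)
    -- the adjoint backward equation
    (hadj : ∀ n < N, (fun ω => p n ω + q n ω * η n ω) =ᵐ[P]
      fun ω => p (n + 1) ω + Bx (n + 1) ω * p (n + 1) ω
        + bdiag (n + 1) * Sx (n + 1) ω * q (n + 1) ω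
        + Lx (n + 1) ω + Sx (n + 1) ω * p (n + 1) ω * ξ (n + 1) ω)
    -- the variation equation
    (hV0 : V 0 =ᵐ[P] fun _ => 0)
    (hVeq : ∀ n < N, V (n + 1) =ᵐ[P]
      fun ω => V n ω + Bx n ω * V n ω + Bu n ω * v n ω
        + (Sx n ω * V n ω + Su n ω * v n ω) * ξ n ω)
    -- integrability of the products appearing in the computation
    (hint1 : ∀ n ≤ N, Integrable (fun ω => p n ω * V n ω) P)
    (hint2 : ∀ n < N, Integrable (fun ω => Lx n ω * V n ω) P ∧
      Integrable (fun ω => Bu n ω * p n ω * v n ω) P ∧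
      Integrable (fun ω => Su n ω * p n ω * v n ω * ξ n ω) P ∧
      Integrable (fun ω => Su n ω * q n ω * v n ω * η n ω * ξ n ω) P ∧
      Integrable (fun ω => V (n + 1) ω * q n ω * η n ω) P ∧
      Integrable (fun ω => Sx n ω * q n ω * V n ω * η n ω * ξ n ω) P ∧
      Integrable (fun ω => Sx n ω * p n ω * V n ω * ξ n ω) P) :
    ∫ ω, p N ω * V N ω ∂P =
      - (∑ n ∈ Finset.range N, ∫ ω, Lx n ω * V n ω ∂P)
      + ∑ n ∈ Finset.range N, ∫ ω, (Bu n ω * p n ω * v n ω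
          + Su n ω * p n ω * v n ω * ξ n ω
          + Su n ω * q n ω * v n ω * η n ω * ξ n ω) ∂P := by

  classical
  set C : ℕ → ℝ := fun m => ∫ ω, (p m ω * V m ω + Bx m ω * p m ω * V m ω
      + Sx m ω * p m ω * V m ω * ξ m ω) ∂P with hC
  set E : ℕ → ℝ := fun m => ∫ ω, Sx m ω * q m ω * V m ω * η m ω * ξ m ω ∂P with hE
  set L : ℕ → ℝ := fun m => ∫ ω, Lx m ω * V m ω ∂P with hL
  set T : ℕ → ℝ := fun n => (∫ ω, Bu n ω * p n ω * v n ω ∂P)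
      + (∫ ω, Su n ω * p n ω * v n ω * ξ n ω ∂P)
      + (∫ ω, Su n ω * q n ω * v n ω * η n ω * ξ n ω ∂P) with hT
  -- L² × L² products are integrable
  have hpV1 : ∀ k, k < N → Integrable (fun ω => p k ω * V (k + 1) ω) P := by
    intro k hk
    have h1 := (hpLp k hk.le).1
    have h2 := (hpLp (k + 1) hk).2.2.1
    have h3 : MemLp (p k • V (k + 1)) 1 P :=
      h2.smul h1
    exact (memLp_one_iff_integrable.mp h3).congr
      (Filter.Eventually.of_forall fun ω => rfl)
  -- integrability of the `C` integrand for k < N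
  have hCint : ∀ k, k < N → Integrable (fun ω => p k ω * V k ω + Bx k ω * p k ω * V k ω
      + Sx k ω * p k ω * V k ω * ξ k ω) P := by
    intro k hk
    obtain ⟨-, hBupv, hSupvξ, -⟩ := hint2 k hk
    have h0 : Integrable (fun ω => p k ω * V (k + 1) ω - Bu k ω * p k ω * v k ω
        - Su k ω * p k ω * v k ω * ξ k ω) P := ((hpV1 k hk).sub hBupv).sub hSupvξ
    refine h0.congr ?_
    filter_upwards [hVeq k hk] with ω hω
    simp only [hω]
    ring
  -- the key one-step identity
  have step : ∀ n, n < N → C (n + 1) + E (n + 1) + L (n + 1) = C n + E n + T n := by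
    intro n hn
    obtain ⟨hLxV, hBupv, hSupvξ, hSuqvηξ, hVqη, hSxqVηξ, hSxpVξ⟩ := hint2 n hn
    have hqηV1 : Integrable (fun ω => q n ω * η n ω * V (n + 1) ω) P :=
      hVqη.congr (Filter.Eventually.of_forall fun ω => by ring)
    have hBsum : Integrable (fun ω => p n ω * V (n + 1) ω
        + q n ω * η n ω * V (n + 1) ω) P := (hpV1 n hn).add hqηV1
    have hBsplit : ∫ ω, (p n ω + q n ω * η n ω) * V (n + 1) ω ∂P
        = (∫ ω, p n ω * V (n + 1) ω ∂P) + ∫ ω, q n ω * η n ω * V (n + 1) ω ∂P := by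
      rw [← integral_add (hpV1 n hn) hqηV1]
      exact integral_congr_ae (Filter.Eventually.of_forall fun ω => by ring)
    have hC12 : Integrable (fun ω => (p n ω * V n ω + Bx n ω * p n ω * V n ω
        + Sx n ω * p n ω * V n ω * ξ n ω) + Bu n ω * p n ω * v n ω) P :=
      (hCint n hn).add hBupv
    have hpVeq : ∫ ω, p n ω * V (n + 1) ω ∂P
        = C n + (∫ ω, Bu n ω * p n ω * v n ω ∂P)
          + ∫ ω, Su n ω * p n ω * v n ω * ξ n ω ∂P := by
      have h1 : ∫ ω, p n ω * V (n + 1) ω ∂P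
          = ∫ ω, (((p n ω * V n ω + Bx n ω * p n ω * V n ω
              + Sx n ω * p n ω * V n ω * ξ n ω)
            + Bu n ω * p n ω * v n ω) + Su n ω * p n ω * v n ω * ξ n ω) ∂P := by
        refine integral_congr_ae ?_
        filter_upwards [hVeq n hn] with ω hω
        simp only [hω]
        ring
      rw [h1, integral_add hC12 hSupvξ, integral_add (hCint n hn) hBupv, hC]
    have hg1 : Integrable (fun ω =>
        q n ω * (V n ω + Bx n ω * V n ω + Bu n ω * v n ω) * η n ω) P := by
      have h0 : Integrable (fun ω => q n ω * η n ω * V (n + 1) ω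
          - Sx n ω * q n ω * V n ω * η n ω * ξ n ω
          - Su n ω * q n ω * v n ω * η n ω * ξ n ω) P := (hqηV1.sub hSxqVηξ).sub hSuqvηξ
      refine h0.congr ?_
      filter_upwards [hVeq n hn] with ω hω
      simp only [hω]
      ring
    have hg1zero : ∫ ω, q n ω * (V n ω + Bx n ω * V n ω + Bu n ω * v n ω) * η n ω ∂P = 0 := by
      refine hzero n hn _ ?_ hg1
      exact (hpmeas n hn.le).2.1.mul (((hpmeas n hn.le).2.2.1.add
        ((hcoefmeas n hn.le).1.mul (hpmeas n hn.le).2.2.1)).add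
        ((hcoefmeas n hn.le).2.2.2.1.mul (hpmeas n hn.le).2.2.2))
    have hg12 : Integrable (fun ω => q n ω * (V n ω + Bx n ω * V n ω + Bu n ω * v n ω) * η n ω
        + Sx n ω * q n ω * V n ω * η n ω * ξ n ω) P := hg1.add hSxqVηξ
    have hqηVeq : ∫ ω, q n ω * η n ω * V (n + 1) ω ∂P
        = E n + ∫ ω, Su n ω * q n ω * v n ω * η n ω * ξ n ω ∂P := by
      have h1 : ∫ ω, q n ω * η n ω * V (n + 1) ω ∂P
          = ∫ ω, ((q n ω * (V n ω + Bx n ω * V n ω + Bu n ω * v n ω) * η n ω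
            + Sx n ω * q n ω * V n ω * η n ω * ξ n ω)
            + Su n ω * q n ω * v n ω * η n ω * ξ n ω) ∂P := by
        refine integral_congr_ae ?_
        filter_upwards [hVeq n hn] with ω hω
        simp only [hω]
        ring
      rw [h1, integral_add hg12 hSuqvηξ, integral_add hg1 hSxqVηξ, hg1zero, hE]
      ring
    -- right side via the adjoint equation
    have hΨint : Integrable (fun ω => (p (n + 1) ω + Bx (n + 1) ω * p (n + 1) ω
        + bdiag (n + 1) * Sx (n + 1) ω * q (n + 1) ω + Lx (n + 1) ω
        + Sx (n + 1) ω * p (n + 1) ω * ξ (n + 1) ω) * V (n + 1) ω) P := by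
      refine hBsum.congr ?_
      filter_upwards [hadj n hn] with ω hω
      rw [← hω]
      ring
    have hBD : ∫ ω, (p n ω + q n ω * η n ω) * V (n + 1) ω ∂P
        = ∫ ω, (p (n + 1) ω + Bx (n + 1) ω * p (n + 1) ω
          + bdiag (n + 1) * Sx (n + 1) ω * q (n + 1) ω + Lx (n + 1) ω
          + Sx (n + 1) ω * p (n + 1) ω * ξ (n + 1) ω) * V (n + 1) ω ∂P := by
      refine integral_congr_ae ?_
      filter_upwards [hadj n hn] with ω hω
      rw [hω]
    have hD : ∫ ω, (p (n + 1) ω + Bx (n + 1) ω * p (n + 1) ω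
        + bdiag (n + 1) * Sx (n + 1) ω * q (n + 1) ω + Lx (n + 1) ω
        + Sx (n + 1) ω * p (n + 1) ω * ξ (n + 1) ω) * V (n + 1) ω ∂P
        = C (n + 1) + L (n + 1) + E (n + 1) := by
      rcases lt_or_eq_of_le (show n + 1 ≤ N from hn) with h | h
      · -- n + 1 < N
        obtain ⟨hLxV2, -, -, -, -, hSxqVηξ2, -⟩ := hint2 (n + 1) h
        have hCint2 := hCint (n + 1) h
        have hI : Integrable (fun ω =>
            bdiag (n + 1) * (Sx (n + 1) ω * q (n + 1) ω * V (n + 1) ω)) P := by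
          have h0 : Integrable (fun ω => (p (n + 1) ω + Bx (n + 1) ω * p (n + 1) ω
              + bdiag (n + 1) * Sx (n + 1) ω * q (n + 1) ω + Lx (n + 1) ω
              + Sx (n + 1) ω * p (n + 1) ω * ξ (n + 1) ω) * V (n + 1) ω
              - (p (n + 1) ω * V (n + 1) ω + Bx (n + 1) ω * p (n + 1) ω * V (n + 1) ω
                + Sx (n + 1) ω * p (n + 1) ω * V (n + 1) ω * ξ (n + 1) ω)
              - Lx (n + 1) ω * V (n + 1) ω) P := (hΨint.sub hCint2).sub hLxV2
          exact h0.congr (Filter.Eventually.of_forall fun ω => by ring)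
        have hCL : Integrable (fun ω => (p (n + 1) ω * V (n + 1) ω
            + Bx (n + 1) ω * p (n + 1) ω * V (n + 1) ω
            + Sx (n + 1) ω * p (n + 1) ω * V (n + 1) ω * ξ (n + 1) ω)
            + Lx (n + 1) ω * V (n + 1) ω) P := hCint2.add hLxV2
        have hsplit : ∫ ω, (p (n + 1) ω + Bx (n + 1) ω * p (n + 1) ω
            + bdiag (n + 1) * Sx (n + 1) ω * q (n + 1) ω + Lx (n + 1) ω
            + Sx (n + 1) ω * p (n + 1) ω * ξ (n + 1) ω) * V (n + 1) ω ∂P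
            = ∫ ω, (((p (n + 1) ω * V (n + 1) ω
                + Bx (n + 1) ω * p (n + 1) ω * V (n + 1) ω
                + Sx (n + 1) ω * p (n + 1) ω * V (n + 1) ω * ξ (n + 1) ω)
              + Lx (n + 1) ω * V (n + 1) ω)
              + bdiag (n + 1) * (Sx (n + 1) ω * q (n + 1) ω * V (n + 1) ω)) ∂P :=
          integral_congr_ae (Filter.Eventually.of_forall fun ω => by ring)
        have hkk := hkey (n + 1) h (fun ω => Sx (n + 1) ω * q (n + 1) ω * V (n + 1) ω)
          (((hcoefmeas (n + 1) h.le).2.1.mul (hpmeas (n + 1) h.le).2.1).mul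
            (hpmeas (n + 1) h.le).2.2.1) hSxqVηξ2
        rw [hsplit, integral_add hCL hI, integral_add hCint2 hLxV2,
          integral_const_mul, ← hkk, hC, hE, hL]
      · -- n + 1 = N
        simp only [hC, hE, hL, h]
        have e1 : ∫ ω, (p N ω + Bx N ω * p N ω + bdiag N * Sx N ω * q N ω + Lx N ω
            + Sx N ω * p N ω * ξ N ω) * V N ω ∂P = ∫ ω, p N ω * V N ω ∂P :=
          integral_congr_ae (Filter.Eventually.of_forall fun ω => by
            simp only [hBxN, hSxN, hLxN]; ring)
        have e2 : ∫ ω, (p N ω * V N ω + Bx N ω * p N ω * V N ω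
            + Sx N ω * p N ω * V N ω * ξ N ω) ∂P = ∫ ω, p N ω * V N ω ∂P :=
          integral_congr_ae (Filter.Eventually.of_forall fun ω => by
            simp only [hBxN, hSxN]; ring)
        have e3 : ∫ ω, Lx N ω * V N ω ∂P = 0 := by
          rw [show (fun ω => Lx N ω * V N ω) = fun _ => (0 : ℝ) from
            funext fun ω => by simp only [hLxN]; ring, integral_zero]
        have e4 : ∫ ω, Sx N ω * q N ω * V N ω * η N ω * ξ N ω ∂P = 0 := by
          rw [show (fun ω => Sx N ω * q N ω * V N ω * η N ω * ξ N ω) = fun _ => (0 : ℝ) from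
            funext fun ω => by simp only [hSxN]; ring, integral_zero]
        rw [e1, e2, e3, e4]
        ring
    have hfin := hBsplit.symm.trans (hBD.trans hD)
    rw [hpVeq, hqηVeq] at hfin
    simp only [hT]
    linarith
  -- telescoping
  have tel : ∀ k, k ≤ N → C k + E k + ∑ n ∈ Finset.range k, L (n + 1)
      = C 0 + E 0 + ∑ n ∈ Finset.range k, T n := by
    intro k
    induction k with
    | zero => intro _; simp
    | succ k ih =>
      intro hk
      have hk2 : k < N := hk
      have h1 := ih hk2.le
      have h2 := step k hk2
      rw [Finset.sum_range_succ, Finset.sum_range_succ]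
      linarith
  -- endpoints
  have hC0 : C 0 = 0 := by
    simp only [hC]
    have h0 : (fun ω => p 0 ω * V 0 ω + Bx 0 ω * p 0 ω * V 0 ω
        + Sx 0 ω * p 0 ω * V 0 ω * ξ 0 ω) =ᵐ[P] fun _ => (0 : ℝ) := by
      filter_upwards [hV0] with ω hω
      simp only [hω]
      ring
    rw [integral_congr_ae h0, integral_zero]
  have hE0 : E 0 = 0 := by
    simp only [hE]
    have h0 : (fun ω => Sx 0 ω * q 0 ω * V 0 ω * η 0 ω * ξ 0 ω) =ᵐ[P] fun _ => (0 : ℝ) := by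
      filter_upwards [hV0] with ω hω
      simp only [hω]
      ring
    rw [integral_congr_ae h0, integral_zero]
  have hCN : C N = ∫ ω, p N ω * V N ω ∂P := by
    simp only [hC]
    exact integral_congr_ae (Filter.Eventually.of_forall fun ω => by
      simp only [hBxN, hSxN]; ring)
  have hEN : E N = 0 := by
    simp only [hE]
    rw [show (fun ω => Sx N ω * q N ω * V N ω * η N ω * ξ N ω) = fun _ => (0 : ℝ) from
      funext fun ω => by simp only [hSxN]; ring, integral_zero]
  have hL0 : L 0 = 0 := by
    simp only [hL]
    have h0 : (fun ω => Lx 0 ω * V 0 ω) =ᵐ[P] fun _ => (0 : ℝ) := by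
      filter_upwards [hV0] with ω hω
      simp only [hω]
      ring
    rw [integral_congr_ae h0, integral_zero]
  have hLN : L N = 0 := by
    simp only [hL]
    rw [show (fun ω => Lx N ω * V N ω) = fun _ => (0 : ℝ) from
      funext fun ω => by simp only [hLxN]; ring, integral_zero]
  -- shift the L-sum
  have hshift : ∑ n ∈ Finset.range N, L (n + 1) = ∑ n ∈ Finset.range N, L n := by
    have h1 := Finset.sum_range_succ' L N
    rw [Finset.sum_range_succ] at h1
    rw [hL0, hLN] at h1
    linarith
  have hmain := tel N le_rfl
  rw [hC0, hE0, hCN, hEN, hshift] at hmain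
  -- rewrite the goal's two sums
  have hsum2 : ∑ n ∈ Finset.range N, (∫ ω, (Bu n ω * p n ω * v n ω
      + Su n ω * p n ω * v n ω * ξ n ω
      + Su n ω * q n ω * v n ω * η n ω * ξ n ω) ∂P) = ∑ n ∈ Finset.range N, T n := by
    refine Finset.sum_congr rfl fun n hn => ?_
    have hn2 : n < N := Finset.mem_range.mp hn
    obtain ⟨-, hBupv, hSupvξ, hSuqvηξ, -⟩ := hint2 n hn2
    have h12 : Integrable (fun ω => Bu n ω * p n ω * v n ω
        + Su n ω * p n ω * v n ω * ξ n ω) P := hBupv.add hSupvξ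
    have h0 : ∫ ω, (Bu n ω * p n ω * v n ω + Su n ω * p n ω * v n ω * ξ n ω
        + Su n ω * q n ω * v n ω * η n ω * ξ n ω) ∂P
        = ∫ ω, ((Bu n ω * p n ω * v n ω + Su n ω * p n ω * v n ω * ξ n ω)
        + Su n ω * q n ω * v n ω * η n ω * ξ n ω) ∂P :=
      integral_congr_ae (Filter.Eventually.of_forall fun ω => by ring)
    rw [h0, integral_add h12 hSuqvηξ, integral_add hBupv hSupvξ, hT]
  have hsum1 : ∑ n ∈ Finset.range N, (∫ ω, Lx n ω * V n ω ∂P) = ∑ n ∈ Finset.range N, L n := by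
    refine Finset.sum_congr rfl fun n _ => ?_
    simp only [hL]
  rw [hsum1, hsum2]
  linarith
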